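/- Let S ⊆ ℤ² be any finite generating set. Then there is a continuous proper edge (2|S|+1)-coloring of the Schreier graph on F(2^{ℤ²}) with generating set S. -/

import Mathlib

/-- The space `2^{ℤⁿ}` with the product topology. -/
abbrev Space (n : ℕ) : Type := (Fin n → ℤ) → Bool

/-- The Bernoulli shift action: `(g · x)(h) = x(g + h)`. -/
def shift {n : ℕ} (g : Fin n → ℤ) (x : Space n) : Space n := fun h => x (g + h)

/-- The free part `F(2^{ℤⁿ})` of the shift action. -/
def FreePart (n : ℕ) : Set (Space n) := {x | ∀ g : Fin n → ℤ, g ≠ 0 → shift g x ≠ x}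

/-- The sup norm on `ℤⁿ`, valued in `ℕ`. -/
def gnorm {n : ℕ} (g : Fin n → ℤ) : ℕ := Finset.univ.sup fun i => (g i).natAbs

/-- The Schreier graph of `F(2^{ℤ²})` with generating set `S`. -/
def SchreierS (S : Finset (Fin 2 → ℤ)) : SimpleGraph (FreePart 2) :=
  SimpleGraph.fromRel fun x y => ∃ g ∈ S, shift g (x : Space 2) = (y : Space 2)

noncomputable section
open Classical

abbrev Z2 := Fin 2 → ℤ

lemma shift_apply {n} (g : Fin n → ℤ) (x : Space n) (v : Fin n → ℤ) :
    shift g x v = x (g + v) := rfl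

lemma shift_shift {n} (g h : Fin n → ℤ) (x : Space n) :
    shift g (shift h x) = shift (g + h) x := by
  funext v; simp only [shift]; congr 1; abel

lemma shift_zero {n} (x : Space n) : shift 0 x = x := by
  funext v; simp [shift]

lemma shift_inj_free {g h : Z2} {x : Space 2} (hx : x ∈ FreePart 2)
    (he : shift g x = shift h x) : g = h := by
  by_contra hne
  apply hx (g - h) (sub_ne_zero.mpr hne)
  have h1 : shift (-h) (shift g x) = shift (-h) (shift h x) := congrArg _ he
  rw [shift_shift, shift_shift] at h1
  have h2 : shift (-h + h) x = x := by rw [neg_add_cancel, shift_zero]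
  calc shift (g - h) x = shift (-h + g) x := by congr 1; abel
  _ = x := h1.trans h2

lemma free_shift {g : Z2} {x : Space 2} (hx : x ∈ FreePart 2) : shift g x ∈ FreePart 2 := by
  intro h hh he
  rw [shift_shift] at he
  have : h + g = g := shift_inj_free hx he
  exact hh (by simpa using this)

lemma shift_eq_self_free {g : Z2} {x : Space 2} (hx : x ∈ FreePart 2)
    (he : shift g x = x) : g = 0 := by
  refine shift_inj_free hx ?_
  rw [he, shift_zero]

lemma gnorm_le_iff {g : Z2} {r : ℕ} : gnorm g ≤ r ↔ ∀ i, (g i).natAbs ≤ r := by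
  simp [gnorm, Finset.sup_le_iff]

lemma gnorm_smul_le (k : ℤ) (t : Z2) : gnorm (k • t) ≤ k.natAbs * gnorm t := by
  rw [gnorm_le_iff]
  intro i
  have : ((k • t) i).natAbs = k.natAbs * (t i).natAbs := by
    simp [Int.natAbs_mul]
  rw [this]
  exact Nat.mul_le_mul_left _ (Finset.le_sup (f := fun i => (t i).natAbs) (by simp))

lemma smul_ne_zero_z2 {k : ℤ} {t : Z2} (hk : k ≠ 0) (ht : t ≠ 0) : k • t ≠ 0 := by
  intro h
  apply ht
  funext i
  have := congrFun h i
  simp only [Pi.smul_apply, smul_eq_mul, Pi.zero_apply] at this ⊢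
  rcases mul_eq_zero.mp this with h | h
  · exact absurd h hk
  · exact h

/-- the box `[-r,r]²` as a list -/
def boxList (r : ℕ) : List Z2 :=
  (List.range (2*r+1)).flatMap fun a =>
    (List.range (2*r+1)).map fun (b : ℕ) =>
      fun j : Fin 2 => if j = 0 then (a : ℤ) - r else (b : ℤ) - r

lemma mem_boxList_iff {r : ℕ} {v : Z2} : v ∈ boxList r ↔ gnorm v ≤ r := by
  constructor
  · intro hv
    simp only [boxList, List.mem_flatMap, List.mem_map, List.mem_range, bind_pure_comp, List.map_eq_map, exists_exists_and_eq_and] at hv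
    obtain ⟨a, ha, b, hb, rfl⟩ := hv
    rw [gnorm_le_iff]
    intro i
    have har : (a:ℤ) < 2*r+1 := by exact_mod_cast ha
    have hbr : (b:ℤ) < 2*r+1 := by exact_mod_cast hb
    fin_cases i <;> simp <;> omega
  · intro hv
    rw [gnorm_le_iff] at hv
    have h0 := hv 0
    have h1 := hv 1
    simp only [boxList, List.mem_flatMap, List.mem_map, List.mem_range, bind_pure_comp, List.map_eq_map, exists_exists_and_eq_and]
    have h0' : -(r:ℤ) ≤ v 0 ∧ v 0 ≤ r := by
      constructor <;> [have := Int.neg_natAbs_le (v 0); have := Int.le_natAbs (a := v 0)] <;>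
        push_cast at * <;> omega
    have h1' : -(r:ℤ) ≤ v 1 ∧ v 1 ≤ r := by
      constructor <;> [have := Int.neg_natAbs_le (v 1); have := Int.le_natAbs (a := v 1)] <;>
        push_cast at * <;> omega
    refine ⟨(v 0 + r).toNat, by omega, (v 1 + r).toNat, by omega, ?_⟩
    funext j
    fin_cases j <;> simp <;> omega

lemma list_map_eq_pointwise {α β : Type*} {l : List α} {f g : α → β}
    (h : l.map f = l.map g) : ∀ a ∈ l, f a = g a := by
  induction l with
  | nil => simp
  | cons a l ih =>
    simp only [List.map_cons, List.cons.injEq] at h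
    intro b hb
    rcases List.mem_cons.mp hb with rfl | hb
    · exact h.1
    · exact ih h.2 b hb
section TST
variable (S : Finset (Fin 2 → ℤ))

/-- lexicographic positivity on ℤ² -/
def lpos (g : Z2) : Prop := 0 < g 0 ∨ (g 0 = 0 ∧ 0 < g 1)

lemma ne_zero_iff_z2 {g : Z2} : g ≠ 0 ↔ (g 0 ≠ 0 ∨ g 1 ≠ 0) := by
  constructor
  · intro h
    by_contra hc
    push_neg at hc
    exact h (funext fun i => by fin_cases i <;> simp [hc.1, hc.2])
  · intro h hc
    subst hc
    simpa using h

lemma lpos_xor {g : Z2} (hg : g ≠ 0) : lpos g ↔ ¬ lpos (-g) := by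
  rw [ne_zero_iff_z2] at hg
  simp only [lpos, Pi.neg_apply]
  omega

/-- chosen set of directions: one out of each `{g, -g}` meeting `S` -/
def TS : Finset Z2 := S.filter (fun g => g ≠ 0 ∧ (-g ∈ S → lpos g))

lemma TS_ne_zero {t : Z2} (ht : t ∈ TS S) : t ≠ 0 := (Finset.mem_filter.mp ht).2.1

lemma TS_subset : TS S ⊆ S := Finset.filter_subset _ _

lemma TS_card_le : (TS S).card ≤ S.card := Finset.card_filter_le _ _

lemma neg_not_mem_TS {t : Z2} (ht : t ∈ TS S) : -t ∉ TS S := by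
  intro h
  obtain ⟨htS, htz, htp⟩ := Finset.mem_filter.mp ht
  obtain ⟨hnS, hnz, hnp⟩ := Finset.mem_filter.mp h
  have h1 : lpos t := htp hnS
  have h2 : lpos (-t) := hnp (by simpa using htS)
  exact ((lpos_xor htz).mp h1) h2

lemma exists_TS_of_S {g : Z2} (hg : g ∈ S) (hgz : g ≠ 0) : g ∈ TS S ∨ -g ∈ TS S := by
  by_cases hn : -g ∈ S
  · by_cases hp : lpos g
    · exact Or.inl (Finset.mem_filter.mpr ⟨hg, hgz, fun _ => hp⟩)
    · right
      refine Finset.mem_filter.mpr ⟨hn, by simpa using hgz, fun _ => ?_⟩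
      exact (lpos_xor hgz).not_left.mp hp
  · exact Or.inl (Finset.mem_filter.mpr ⟨hg, hgz, fun h => absurd h hn⟩)

end TST
variable (S : Finset (Fin 2 → ℤ))

def tll : List Z2 := (TS S).toList
def tau : ℕ := (tll S).length
def tg (i : ℕ) : Z2 := (tll S).getD i 0
def Wc : ℕ := 8 * tau S + 8
def Jc : ℕ := 100 * (tau S + 1) * Wc S * (Wc S + 1)
def maxgn : ℕ := (TS S).sup gnorm
def Dap : ℕ := Jc S * maxgn S

lemma Wc_pos : 0 < Wc S := by unfold Wc; omega
lemma Wc_le_Jc : Wc S ≤ Jc S := by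
  have h1 : 1 ≤ 100 * (tau S + 1) := by omega
  have h2 : 1 ≤ Wc S + 1 := by omega
  calc Wc S = 1 * Wc S * 1 := by ring
  _ ≤ 100 * (tau S + 1) * Wc S * (Wc S + 1) := by
      exact Nat.mul_le_mul (Nat.mul_le_mul (by omega) le_rfl) h2
  _ = Jc S := rfl

lemma tau_le_card : tau S ≤ S.card := by
  have h : tau S = (TS S).card := (Finset.length_toList _)
  rw [h]
  exact TS_card_le S

lemma tg_mem {i : ℕ} (hi : i < tau S) : tg S i ∈ TS S := by
  rw [tg, List.getD_eq_getElem?_getD, List.getElem?_eq_getElem hi, Option.getD_some]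
  exact Finset.mem_toList.mp (List.getElem_mem _)

lemma tg_inj {i j : ℕ} (hi : i < tau S) (hj : j < tau S) (hne : i ≠ j) :
    tg S i ≠ tg S j := by
  rw [tg, tg, List.getD_eq_getElem?_getD, List.getElem?_eq_getElem hi, Option.getD_some,
    List.getD_eq_getElem?_getD, List.getElem?_eq_getElem hj, Option.getD_some]
  intro h
  have := (Finset.nodup_toList (TS S)).getElem_inj_iff.mp h
  exact hne this

lemma gnorm_tg_le {t : Z2} (ht : t ∈ TS S) : gnorm t ≤ maxgn S :=
  Finset.le_sup ht

lemma gnorm_kt_le {t : Z2} {k : ℤ} (ht : t ∈ TS S) (hk : k.natAbs ≤ Jc S) :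
    gnorm (k • t) ≤ Dap S :=
  le_trans (gnorm_smul_le k t) (Nat.mul_le_mul hk (gnorm_tg_le S ht))

/-- pattern of `x` on the box of radius `r` is `Dap`-aperiodic -/
def apd (x : Space 2) (r : ℕ) : Prop :=
  ∀ g : Z2, g ≠ 0 → gnorm g ≤ Dap S → ∃ h : Z2, gnorm h ≤ r ∧ x h ≠ x (g + h)

def EX (x : Space 2) : Prop := ∃ r, apd S x r

lemma apd_mono {x r r'} (h : apd S x r) (hr : r ≤ r') : apd S x r' := by
  intro g hg hgn
  obtain ⟨h₀, hh, hne⟩ := h g hg hgn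
  exact ⟨h₀, le_trans hh hr, hne⟩

lemma free_EX {x : Space 2} (hx : x ∈ FreePart 2) : EX S x := by
  classical
  set F : Z2 → ℕ := fun g => if hg : ∃ h : Z2, x (g + h) ≠ x h
    then gnorm (Classical.choose hg) else 0 with hF
  refine ⟨((boxList (Dap S)).map F).sum, ?_⟩
  intro g hgz hgn
  have hsh : shift g x ≠ x := hx g hgz
  have hne : ∃ h : Z2, x (g + h) ≠ x h := by
    by_contra hc
    push_neg at hc
    exact hsh (funext fun h => (hc h))
  refine ⟨Classical.choose hne, ?_, (Classical.choose_spec hne).symm⟩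
  have : F g = gnorm (Classical.choose hne) := by rw [hF]; simp [hne]
  rw [← this]
  exact List.single_le_sum (fun n _ => Nat.zero_le n) _
    (List.mem_map.mpr ⟨g, mem_boxList_iff.mpr hgn, rfl⟩)

def rad (x : Space 2) : ℕ := if h : EX S x then Nat.find h else 0
def codeP (x : Space 2) : ℕ := Encodable.encode ((boxList (rad S x)).map x)
def keyC (x : Space 2) : ℕ := Nat.pair (rad S x) (codeP S x)
def CK (K : ℕ) : Set (Space 2) := {x | EX S x ∧ keyC S x = K}

lemma rad_spec {x} (h : EX S x) : apd S x (rad S x) := by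
  rw [rad, dif_pos h]; exact Nat.find_spec h

lemma rad_min {x} (h : EX S x) {r} (hr : apd S x r) : rad S x ≤ r := by
  rw [rad, dif_pos h]; exact Nat.find_min' h hr

lemma key_eq_pattern {x y} (h : keyC S x = keyC S y) :
    rad S x = rad S y ∧ ∀ v : Z2, gnorm v ≤ rad S x → x v = y v := by
  rw [keyC, keyC, Nat.pair_eq_pair] at h
  obtain ⟨hr, hc⟩ := h
  refine ⟨hr, ?_⟩
  rw [codeP, codeP, ← hr] at hc
  have hl := Encodable.encode_injective hc
  intro v hv
  exact list_map_eq_pointwise hl v (mem_boxList_iff.mpr hv)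

lemma class_sep {x : Space 2} {g : Z2} (hg : g ≠ 0) (hgn : gnorm g ≤ Dap S)
    (hx : EX S x) (hk : keyC S x = keyC S (shift g x)) : False := by
  obtain ⟨hr, hp⟩ := key_eq_pattern S hk
  obtain ⟨h, hh, hne⟩ := rad_spec S hx g hg hgn
  exact hne (hp h hh)

lemma gnorm_add_le (a b : Z2) : gnorm (a + b) ≤ gnorm a + gnorm b := by
  rw [gnorm_le_iff]
  intro i
  calc ((a + b) i).natAbs = (a i + b i).natAbs := rfl
  _ ≤ (a i).natAbs + (b i).natAbs := Int.natAbs_add_le _ _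
  _ ≤ gnorm a + gnorm b := Nat.add_le_add
      (Finset.le_sup (f := fun i => (a i).natAbs) (by simp))
      (Finset.le_sup (f := fun i => (b i).natAbs) (by simp))

lemma apd_transfer {x y : Space 2} {r}
    (hagr : ∀ v : Z2, gnorm v ≤ r + Dap S → y v = x v) (h : apd S x r) :
    apd S y r := by
  intro g hgz hgn
  obtain ⟨h₀, hh, hne⟩ := h g hgz hgn
  refine ⟨h₀, hh, ?_⟩
  rw [hagr h₀ (le_trans hh (Nat.le_add_right _ _)),
    hagr (g + h₀) (le_trans (gnorm_add_le g h₀) (by omega))]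
  exact hne

lemma key_transfer {x y : Space 2} (hx : EX S x)
    (hagr : ∀ v : Z2, gnorm v ≤ rad S x + Dap S → y v = x v) :
    EX S y ∧ keyC S y = keyC S x := by
  have h1 : apd S y (rad S x) := apd_transfer S hagr (rad_spec S hx)
  have hEy : EX S y := ⟨_, h1⟩
  have hle : rad S y ≤ rad S x := rad_min S hEy h1
  have hge : rad S x ≤ rad S y := by
    have h2 : apd S x (rad S y) := by
      refine apd_transfer S (fun v hv => (hagr v ?_).symm) (rad_spec S hEy)
      omega
    exact rad_min S hx h2
  have hr : rad S y = rad S x := le_antisymm hle hge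
  refine ⟨hEy, ?_⟩
  rw [keyC, keyC, hr, codeP, codeP, hr]
  congr 2
  exact List.map_congr_left (fun v hv =>
    hagr v (le_trans (mem_boxList_iff.mp hv) (Nat.le_add_right _ _)))
/-! ### The greedy marker construction -/

def bnd (t t' : Z2) : ℕ := if t' = t then Jc S else Wc S

lemma bnd_le_Jc (t t' : Z2) : bnd S t t' ≤ Jc S := by
  unfold bnd
  split
  · exact le_rfl
  · exact Wc_le_Jc S

def NN (t : Z2) (M : Set (Space 2)) : Set (Space 2) :=
  {x | ∃ t' ∈ TS S, ∃ k : ℤ, k ≠ 0 ∧ k.natAbs ≤ bnd S t t' ∧ shift (k • t') x ∈ M}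

lemma NN_mono {t : Z2} {M M' : Set (Space 2)} (h : M ⊆ M') : NN S t M ⊆ NN S t M' := by
  rintro x ⟨t', ht', k, hk, hkb, hm⟩
  exact ⟨t', ht', k, hk, hkb, h hm⟩

def Excl (t : Z2) (Z : Set (Space 2)) : Set (Space 2) :=
  {x | x ∈ Z ∨ shift (-t) x ∈ Z}

def pre (t : Z2) (Z : Set (Space 2)) : ℕ → Set (Space 2)
  | 0 => ∅
  | K+1 => pre t Z K ∪ (CK S K \ (NN S t (pre t Z K) ∪ Excl t Z))

def stageK (t : Z2) (Z : Set (Space 2)) (K : ℕ) : Set (Space 2) :=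
  CK S K \ (NN S t (pre S t Z K) ∪ Excl t Z)

def BB (t : Z2) (Z : Set (Space 2)) : Set (Space 2) := ⋃ K, stageK S t Z K

lemma pre_mono {t Z} {m K : ℕ} (h : m ≤ K) : pre S t Z m ⊆ pre S t Z K := by
  induction K with
  | zero => simp_all
  | succ K ih =>
    rcases Nat.lt_or_ge m (K+1) with h' | h'
    · exact subset_trans (ih (by omega)) (Set.subset_union_left)
    · have : m = K + 1 := by omega
      subst this
      exact subset_rfl

lemma stage_sub_pre {t Z} {K : ℕ} : stageK S t Z K ⊆ pre S t Z (K+1) :=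
  Set.subset_union_right

lemma pre_sub_BB {t Z} {K : ℕ} : pre S t Z K ⊆ BB S t Z := by
  induction K with
  | zero => simp [pre]
  | succ K ih =>
    intro x hx
    rcases hx with hx | hx
    · exact ih hx
    · exact Set.mem_iUnion.mpr ⟨K, hx⟩

lemma stage_sub_CK {t Z} {K : ℕ} : stageK S t Z K ⊆ CK S K :=
  Set.diff_subset

lemma mem_BB_iff {t Z} {x : Space 2} (hx : EX S x) :
    x ∈ BB S t Z ↔ x ∈ stageK S t Z (keyC S x) := by
  constructor
  · intro h
    obtain ⟨K, hK⟩ := Set.mem_iUnion.mp h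
    have := (stage_sub_CK S hK).2
    rwa [this]
  · intro h
    exact Set.mem_iUnion.mpr ⟨_, h⟩

lemma dichotomy {t Z} {x : Space 2} (hx : EX S x) :
    x ∈ BB S t Z ∨ x ∈ NN S t (BB S t Z) ∨ x ∈ Excl t Z := by
  by_cases h1 : x ∈ NN S t (pre S t Z (keyC S x))
  · exact Or.inr (Or.inl (NN_mono S (pre_sub_BB S) h1))
  · by_cases h2 : x ∈ Excl t Z
    · exact Or.inr (Or.inr h2)
    · left
      exact Set.mem_iUnion.mpr ⟨keyC S x, ⟨⟨hx, rfl⟩, fun hc => hc.elim h1 h2⟩⟩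

/-- separation of the marker sets -/
lemma BB_sep {t Z} {x : Space 2} {t' : Z2} {k : ℤ} (ht' : t' ∈ TS S) (hk : k ≠ 0)
    (hkb : k.natAbs ≤ bnd S t t') (h1 : x ∈ BB S t Z) (h2 : shift (k • t') x ∈ BB S t Z) :
    False := by
  obtain ⟨K, hK⟩ := Set.mem_iUnion.mp h1
  obtain ⟨K', hK'⟩ := Set.mem_iUnion.mp h2
  set y := shift (k • t') x with hy
  have hxK : keyC S x = K := (stage_sub_CK S hK).2
  have hyK : keyC S y = K' := (stage_sub_CK S hK').2
  have hshift : shift ((-k) • t') y = x := by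
    rw [hy, shift_shift]
    have : (-k) • t' + k • t' = 0 := by
      rw [← add_smul]; simp
    rw [this, shift_zero]
  rcases lt_trichotomy K K' with h | h | h
  · -- y was added later, but x was in `pre K'`
    apply hK'.2
    left
    refine ⟨t', ht', -k, by simpa using hk, by simpa using hkb, ?_⟩
    rw [hshift]
    exact pre_mono S h (stage_sub_pre S hK)
  · -- same class: aperiodicity
    have hEx : EX S x := (stage_sub_CK S hK).1
    refine class_sep S (smul_ne_zero_z2 hk (TS_ne_zero S ht')) ?_ hEx ?_
    · exact gnorm_kt_le S ht' (le_trans hkb (bnd_le_Jc S t t'))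
    · rw [hxK, ← hy, hyK, h]
  · apply hK.2
    left
    exact ⟨t', ht', k, hk, hkb, pre_mono S h (stage_sub_pre S hK')⟩
/-! ### Local determination -/

def Loc (A : Set (Space 2)) : Prop :=
  ∀ x ∈ FreePart 2, ∃ L : List Z2,
    ∀ y ∈ FreePart 2, (∀ v ∈ L, y v = x v) → (y ∈ A ↔ x ∈ A)

lemma Loc_empty : Loc (∅ : Set (Space 2)) := fun x _ => ⟨[], fun y _ _ => by simp⟩

lemma Loc_union {A B : Set (Space 2)} (hA : Loc A) (hB : Loc B) : Loc (A ∪ B) := by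
  intro x hx
  obtain ⟨LA, hLA⟩ := hA x hx
  obtain ⟨LB, hLB⟩ := hB x hx
  refine ⟨LA ++ LB, fun y hy hagr => ?_⟩
  have h1 := hLA y hy (fun v hv => hagr v (by simp [hv]))
  have h2 := hLB y hy (fun v hv => hagr v (by simp [hv]))
  simp only [Set.mem_union]
  rw [h1, h2]

lemma Loc_diff {A B : Set (Space 2)} (hA : Loc A) (hB : Loc B) : Loc (A \ B) := by
  intro x hx
  obtain ⟨LA, hLA⟩ := hA x hx
  obtain ⟨LB, hLB⟩ := hB x hx
  refine ⟨LA ++ LB, fun y hy hagr => ?_⟩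
  have h1 := hLA y hy (fun v hv => hagr v (by simp [hv]))
  have h2 := hLB y hy (fun v hv => hagr v (by simp [hv]))
  simp only [Set.mem_diff]
  rw [h1, h2]

lemma Loc_shiftPre {A : Set (Space 2)} (hA : Loc A) (c : Z2) :
    Loc {x | shift c x ∈ A} := by
  intro x hx
  obtain ⟨L, hL⟩ := hA (shift c x) (free_shift hx)
  refine ⟨L.map (fun v => c + v), fun y hy hagr => ?_⟩
  exact hL (shift c y) (free_shift hy)
    (fun v hv => hagr (c + v) (List.mem_map.mpr ⟨v, hv, rfl⟩))

lemma Loc_biUnion {ι : Type*} (s : Finset ι) (f : ι → Set (Space 2))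
    (h : ∀ i ∈ s, Loc (f i)) : Loc (⋃ i ∈ s, f i) := by
  classical
  induction s using Finset.induction with
  | empty => simpa using Loc_empty
  | insert a s' hni ih =>
    have : (⋃ i ∈ insert a s', f i) = f a ∪ ⋃ i ∈ s', f i := by
      simp [Set.biUnion_insert]
    rw [this]
    exact Loc_union (h a (by simp)) (ih (fun i hi => h i (by simp [hi])))

lemma Loc_CK (K : ℕ) : Loc (CK S K) := by
  intro x hx
  have hEx : EX S x := free_EX S hx
  refine ⟨boxList (rad S x + Dap S), fun y hy hagr => ?_⟩
  have hky := key_transfer S hEx (fun v hv => hagr v (mem_boxList_iff.mpr hv))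
  constructor
  · rintro ⟨hEy, hk⟩
    exact ⟨hEx, by rw [← hky.2, hk]⟩
  · rintro ⟨_, hk⟩
    exact ⟨hky.1, by rw [hky.2, hk]⟩

lemma NN_eq_biUnion (t : Z2) (M : Set (Space 2)) :
    NN S t M = ⋃ p ∈ ((TS S) ×ˢ (Finset.Icc (-(Jc S : ℤ)) (Jc S))).filter
        (fun p => p.2 ≠ 0 ∧ p.2.natAbs ≤ bnd S t p.1),
      {x | shift (p.2 • p.1) x ∈ M} := by
  ext x
  simp only [NN, Set.mem_setOf_eq, Set.mem_iUnion, Finset.mem_filter, Finset.mem_product,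
    Finset.mem_Icc, exists_prop]
  constructor
  · rintro ⟨t', ht', k, hk, hkb, hm⟩
    have hkJ : k.natAbs ≤ Jc S := le_trans hkb (bnd_le_Jc S t t')
    refine ⟨(t', k), ⟨⟨ht', ?_, ?_⟩, hk, hkb⟩, hm⟩
    · omega
    · omega
  · rintro ⟨⟨t', k⟩, ⟨⟨ht', _, _⟩, hk, hkb⟩, hm⟩
    exact ⟨t', ht', k, hk, hkb, hm⟩

lemma Loc_NN {t : Z2} {M : Set (Space 2)} (hM : Loc M) : Loc (NN S t M) := by
  rw [NN_eq_biUnion]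
  exact Loc_biUnion _ _ (fun p _ => Loc_shiftPre hM _)

lemma Loc_Excl {t : Z2} {Z : Set (Space 2)} (hZ : Loc Z) : Loc (Excl t Z) := by
  have : Excl t Z = Z ∪ {x | shift (-t) x ∈ Z} := rfl
  rw [this]
  exact Loc_union hZ (Loc_shiftPre hZ _)

lemma Loc_pre {t : Z2} {Z : Set (Space 2)} (hZ : Loc Z) (K : ℕ) :
    Loc (pre S t Z K) := by
  induction K with
  | zero => exact Loc_empty
  | succ K ih =>
    exact Loc_union ih (Loc_diff (Loc_CK S K) (Loc_union (Loc_NN S ih) (Loc_Excl hZ)))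

lemma Loc_stage {t : Z2} {Z : Set (Space 2)} (hZ : Loc Z) (K : ℕ) :
    Loc (stageK S t Z K) :=
  Loc_diff (Loc_CK S K) (Loc_union (Loc_NN S (Loc_pre S hZ K)) (Loc_Excl hZ))

lemma Loc_BB {t : Z2} {Z : Set (Space 2)} (hZ : Loc Z) : Loc (BB S t Z) := by
  intro x hx
  have hEx : EX S x := free_EX S hx
  obtain ⟨L1, hL1⟩ := Loc_stage S hZ (keyC S x) x hx
  refine ⟨boxList (rad S x + Dap S) ++ L1, fun y hy hagr => ?_⟩
  have hky := key_transfer S hEx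
    (fun v hv => hagr v (by simp [mem_boxList_iff.mpr hv]))
  rw [mem_BB_iff S hEx, mem_BB_iff S hky.1, hky.2]
  exact hL1 y hy (fun v hv => hagr v (by simp [hv]))
/-! ### Zones and the full marker family -/

def zoneOf (B : Set (Space 2)) (t : Z2) : Set (Space 2) :=
  B ∪ {x | shift t x ∈ B}

def zacc : ℕ → Set (Space 2)
  | 0 => ∅
  | i+1 => zacc i ∪ zoneOf (BB S (tg S i) (zacc i)) (tg S i)

def Bf (i : ℕ) : Set (Space 2) := BB S (tg S i) (zacc S i)

lemma mem_zacc_iff {i : ℕ} {v : Space 2} :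
    v ∈ zacc S i ↔ ∃ j < i, v ∈ zoneOf (Bf S j) (tg S j) := by
  induction i with
  | zero => simp [zacc]
  | succ i ih =>
    constructor
    · rintro (h | h)
      · obtain ⟨j, hj, hv⟩ := ih.mp h
        exact ⟨j, by omega, hv⟩
      · exact ⟨i, by omega, h⟩
    · rintro ⟨j, hj, hv⟩
      rcases Nat.lt_or_ge j i with h' | h'
      · exact Or.inl (ih.mpr ⟨j, h', hv⟩)
      · have : j = i := by omega
        subst this
        exact Or.inr hv

lemma Loc_zacc (i : ℕ) : Loc (zacc S i) := by
  induction i with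
  | zero => exact Loc_empty
  | succ i ih =>
    refine Loc_union ih (Loc_union (Loc_BB S ih) (Loc_shiftPre (Loc_BB S ih) _))

lemma Loc_Bf (i : ℕ) : Loc (Bf S i) := Loc_BB S (Loc_zacc S i)

/-- zones are pairwise disjoint -/
lemma zone_disj {i j : ℕ} (hij : j < i) {v : Space 2}
    (hvi : v ∈ zoneOf (Bf S i) (tg S i)) (hvj : v ∈ zoneOf (Bf S j) (tg S j)) : False := by
  have hz : v ∈ zacc S i := (mem_zacc_iff S).mpr ⟨j, hij, hvj⟩
  rcases hvi with hb | hb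
  · obtain ⟨K, hK⟩ := Set.mem_iUnion.mp hb
    exact hK.2 (Or.inr (Or.inl hz))
  · obtain ⟨K, hK⟩ := Set.mem_iUnion.mp hb
    apply hK.2
    right
    right
    show shift (-(tg S i)) (shift (tg S i) v) ∈ zacc S i
    rwa [shift_shift, neg_add_cancel, shift_zero]

/-! ### Counting lemma -/

lemma sep_card_mul {s : Finset ℤ} {a b d : ℤ} (hd : 0 < d) (hab : a ≤ b)
    (hs : s ⊆ Finset.Icc a b)
    (hsep : ∀ m ∈ s, ∀ n ∈ s, m ≠ n → d ≤ |m - n|) :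
    (s.card : ℤ) * d ≤ (b - a) + d := by
  have hcard : s.card ≤ ((b - a) / d + 1).toNat := by
    have : s.card ≤ (Finset.Icc (0 : ℤ) ((b - a)/d)).card := by
      apply Finset.card_le_card_of_injOn (fun m => (m - a) / d)
      · intro m hm
        have hm' := hs hm
        rw [Finset.mem_Icc] at hm'
        rw [Finset.coe_Icc, Set.mem_Icc]
        constructor
        · exact Int.ediv_nonneg (by omega) (by omega)
        · exact Int.ediv_le_ediv hd (by omega)
      · intro m hm n hn hmn
        have hmn' : (m - a)/d = (n - a)/d := hmn
        by_contra hne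
        have hd' := hsep m hm n hn hne
        rcases abs_cases (m - n) with ⟨he, _⟩ | ⟨he, _⟩
        · -- n + d ≤ m
          have h1 : n - a + d ≤ m - a := by omega
          have h2 : (n - a + d) / d ≤ (m - a)/d := Int.ediv_le_ediv hd h1
          have h3 : (n - a + d)/d = (n - a)/d + 1 := by
            have := Int.add_mul_ediv_right (n - a) 1 (by omega : d ≠ 0)
            simpa using this
          omega
        · have h1 : m - a + d ≤ n - a := by omega
          have h2 : (m - a + d) / d ≤ (n - a)/d := Int.ediv_le_ediv hd h1
          have h3 : (m - a + d)/d = (m - a)/d + 1 := by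
            have := Int.add_mul_ediv_right (m - a) 1 (by omega : d ≠ 0)
            simpa using this
          omega
    rwa [Int.card_Icc, show (b-a)/d + 1 - 0 = (b-a)/d + 1 by ring] at this
  have h0 : (0:ℤ) ≤ (b - a)/d := Int.ediv_nonneg (by omega) (by omega)
  have hc2 : (s.card : ℤ) ≤ (b - a)/d + 1 := by
    calc (s.card : ℤ) ≤ (((b - a) / d + 1).toNat : ℤ) := by exact_mod_cast hcard
    _ = (b - a)/d + 1 := by omega
  calc (s.card : ℤ) * d ≤ ((b - a)/d + 1) * d := by
        exact mul_le_mul_of_nonneg_right hc2 (by omega)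
  _ = (b - a)/d * d + d := by ring
  _ ≤ (b - a) + d := by
        have := Int.ediv_mul_le (b - a) (show d ≠ 0 by omega)
        omega
/-! ### Tail hitting -/

lemma shift_smul_shift (a b : ℤ) (t : Z2) (x : Space 2) :
    shift (a • t) (shift (b • t) x) = shift ((a + b) • t) x := by
  rw [shift_shift, add_smul]

lemma tail_hit {i : ℕ} (hi : i < tau S) {x : Space 2} (hx : x ∈ FreePart 2) (N : ℤ) :
    ∃ k : ℤ, N ≤ k ∧ shift (k • tg S i) x ∈ Bf S i := by
  classical
  by_contra hcon
  push_neg at hcon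
  set t : Z2 := tg S i with ht_def
  have ht : t ∈ TS S := tg_mem S hi
  set Jz : ℤ := (Jc S : ℤ) with hJz
  set Wz : ℤ := (Wc S : ℤ) with hWz
  have hJ0 : 0 ≤ Jz := by positivity
  have hW0 : 0 ≤ Wz := by positivity
  set len : ℤ := 8 * Jz with hlen
  set I : Finset ℤ := Finset.Icc (N + Jz) (N + Jz + len) with hI
  set fam : (Z2 × ℕ) → Finset ℤ :=
    fun p => I.filter (fun k => shift (p.1 + k • t) x ∈ Bf S p.2) with hfam
  set famA : Finset (Z2 × ℕ) :=
    (((TS S).erase t) ×ˢ Finset.Icc (-Wz) Wz).image (fun p => (p.2 • p.1, i)) with hfamA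
  set famB : Finset (Z2 × ℕ) :=
    (Finset.range i).biUnion (fun j =>
      ({0, tg S j, -t, tg S j - t} : Finset Z2).image (fun c => (c, j))) with hfamB
  -- covering
  have hcov : ∀ k ∈ I, ∃ p, p ∈ famA ∪ famB ∧ k ∈ fam p := by
    intro k hk
    rw [hI, Finset.mem_Icc] at hk
    set z := shift (k • t) x with hz
    have hzf : z ∈ FreePart 2 := free_shift hx
    have hzE : EX S z := free_EX S hzf
    rcases dichotomy S (t := t) (Z := zacc S i) hzE with hmem | hmem | hmem
    · exact absurd hmem (hcon k (by omega))
    · obtain ⟨t', ht', k', hk'0, hk'b, hm⟩ := hmem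
      by_cases htt : t' = t
      · exfalso
        subst htt
        rw [hz, shift_smul_shift] at hm
        have hb : k'.natAbs ≤ Jc S := le_trans hk'b (bnd_le_Jc S _ _)
        exact hcon (k' + k) (by omega) hm
      · refine ⟨(k' • t', i), Finset.mem_union_left _ ?_, ?_⟩
        · rw [hfamA]
          apply Finset.mem_image.mpr
          refine ⟨(t', k'), ?_, rfl⟩
          rw [Finset.mem_product, Finset.mem_Icc]
          have hb : k'.natAbs ≤ Wc S := by
            have := hk'b
            rwa [bnd, if_neg htt] at this
          exact ⟨Finset.mem_erase.mpr ⟨htt, ht'⟩, by omega, by omega⟩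
        · rw [hfam]
          apply Finset.mem_filter.mpr
          refine ⟨by rw [hI, Finset.mem_Icc]; omega, ?_⟩
          show shift (k' • t' + k • t) x ∈ Bf S i
          rwa [← shift_shift, ← hz]
    · have split4 : ∃ j < i, ∃ c ∈ ({0, tg S j, -t, tg S j - t} : Finset Z2),
          shift (c + k • t) x ∈ Bf S j := by
        rcases hmem with hmem | hmem
        · obtain ⟨j, hj, hzo⟩ := (mem_zacc_iff S).mp hmem
          rcases hzo with hb | hb
          · exact ⟨j, hj, 0, by simp, by rwa [zero_add, ← hz]⟩
          · refine ⟨j, hj, tg S j, by simp, ?_⟩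
            have hb' : shift (tg S j) z ∈ Bf S j := hb
            rwa [hz, shift_shift] at hb'
        · obtain ⟨j, hj, hzo⟩ := (mem_zacc_iff S).mp hmem
          rcases hzo with hb | hb
          · refine ⟨j, hj, -t, by simp, ?_⟩
            rwa [hz, shift_shift] at hb
          · refine ⟨j, hj, tg S j - t, by simp, ?_⟩
            have hb' : shift (tg S j) (shift (-t) z) ∈ Bf S j := hb
            rw [hz, shift_shift, shift_shift] at hb'
            have he : tg S j + -t + k • t = tg S j - t + k • t := by abel
            rwa [he] at hb'
      obtain ⟨j, hj, c, hc, hmem'⟩ := split4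
      refine ⟨(c, j), Finset.mem_union_right _ ?_, ?_⟩
      · rw [hfamB]
        exact Finset.mem_biUnion.mpr ⟨j, Finset.mem_range.mpr hj,
          Finset.mem_image.mpr ⟨c, hc, rfl⟩⟩
      · rw [hfam]
        exact Finset.mem_filter.mpr ⟨by rw [hI, Finset.mem_Icc]; omega, hmem'⟩
  -- counting
  have hIcard : (I.card : ℤ) = len + 1 := by
    rw [hI, Int.card_Icc]
    omega
  have hsub : I ⊆ (famA ∪ famB).biUnion fam := by
    intro k hk
    obtain ⟨p, hp, hkp⟩ := hcov k hk
    exact Finset.mem_biUnion.mpr ⟨p, hp, hkp⟩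
  have hcount : I.card ≤ ∑ p ∈ famA ∪ famB, (fam p).card :=
    le_trans (Finset.card_le_card hsub) (Finset.card_biUnion_le)
  -- separation bounds
  have hsepA : ∀ p : Z2 × ℕ, p.2 = i → (fam p).card ≤ 9 := by
    intro p hp2
    obtain ⟨cc, pj⟩ := p
    dsimp at hp2 ⊢
    have hsep : ∀ m ∈ fam (cc, pj), ∀ n ∈ fam (cc, pj), m ≠ n → (Jz + 1) ≤ |m - n| := by
      intro m hm n hn hmn
      rw [hfam, Finset.mem_filter] at hm hn
      by_contra habs
      push_neg at habs
      rw [abs_lt] at habs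
      have habs' : (n - m).natAbs ≤ Jc S := by omega
      have hrel : shift ((n - m) • t) (shift (cc + m • t) x) = shift (cc + n • t) x := by
        rw [shift_shift]
        congr 1
        rw [sub_smul]
        abel
      have hm2 : shift (cc + m • t) x ∈ BB S t (zacc S i) := by
        have h := hm.2
        dsimp at h
        rwa [hp2] at h
      have hn2 : shift (cc + n • t) x ∈ BB S t (zacc S i) := by
        have h := hn.2
        dsimp at h
        rwa [hp2] at h
      refine BB_sep S (t := t) (Z := zacc S i) ht (sub_ne_zero.mpr (Ne.symm hmn)) ?_ hm2 ?_
      · rw [bnd, if_pos rfl]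
        exact habs'
      · rw [hrel]
        exact hn2
    have hmul := sep_card_mul (d := Jz + 1) (a := N + Jz) (b := N + Jz + len)
      (by omega) (by omega) (Finset.filter_subset _ I) hsep
    have hmul' : ((fam (cc, pj)).card : ℤ) * (Jz + 1)
        ≤ (N + Jz + len) - (N + Jz) + (Jz + 1) := hmul
    by_contra hgt
    push_neg at hgt
    have h10 : (10:ℤ) ≤ ((fam (cc, pj)).card : ℤ) := by exact_mod_cast hgt
    nlinarith [hmul', h10, hJ0]
  have hsepB : ∀ p : Z2 × ℕ, p.2 < i → (fam p).card ≤ 800 * (tau S + 1) * Wc S + 1 := by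
    intro p hp2
    have htne : t ≠ tg S p.2 := tg_inj S hi (by omega) (by omega)
    obtain ⟨cc, pj⟩ := p
    dsimp at hp2 htne ⊢
    have hsep : ∀ m ∈ fam (cc, pj), ∀ n ∈ fam (cc, pj), m ≠ n → (Wz + 1) ≤ |m - n| := by
      intro m hm n hn hmn
      rw [hfam, Finset.mem_filter] at hm hn
      by_contra habs
      push_neg at habs
      rw [abs_lt] at habs
      have habs' : (n - m).natAbs ≤ Wc S := by omega
      have hrel : shift ((n - m) • t) (shift (cc + m • t) x) = shift (cc + n • t) x := by
        rw [shift_shift]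
        congr 1
        rw [sub_smul]
        abel
      refine BB_sep S (t := tg S pj) (Z := zacc S pj) ht
        (sub_ne_zero.mpr (Ne.symm hmn)) ?_ hm.2 ?_
      · rw [bnd, if_neg htne]
        exact habs'
      · rw [hrel]
        exact hn.2
    have hmul := sep_card_mul (d := Wz + 1) (a := N + Jz) (b := N + Jz + len)
      (by omega) (by omega) (Finset.filter_subset _ I) hsep
    have hmul' : ((fam (cc, pj)).card : ℤ) * (Wz + 1)
        ≤ (N + Jz + len) - (N + Jz) + (Wz + 1) := hmul
    have hlen' : (N + Jz + len) - (N + Jz) + (Wz + 1)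
        = (800 * (tau S + 1) * Wc S + 1) * (Wz + 1) := by
      rw [hlen, hJz, hWz, Jc]
      push_cast
      ring
    rw [hlen'] at hmul'
    have hfin := le_of_mul_le_mul_right hmul' (by omega : (0:ℤ) < Wz + 1)
    exact_mod_cast hfin
  -- assemble
  have hA2 : ∀ p ∈ famA, p.2 = i := by
    intro p hp
    rw [hfamA] at hp
    obtain ⟨q, _, rfl⟩ := Finset.mem_image.mp hp
    rfl
  have hB2 : ∀ p ∈ famB, p.2 < i := by
    intro p hp
    rw [hfamB] at hp
    obtain ⟨j, hj, hp'⟩ := Finset.mem_biUnion.mp hp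
    obtain ⟨c, _, rfl⟩ := Finset.mem_image.mp hp'
    exact Finset.mem_range.mp hj
  have hsum : ∑ p ∈ famA ∪ famB, (fam p).card ≤
      ∑ p ∈ famA, (fam p).card + ∑ p ∈ famB, (fam p).card := by
    calc ∑ p ∈ famA ∪ famB, (fam p).card
        ≤ ∑ p ∈ famA, (fam p).card + ∑ p ∈ (famB \ famA), (fam p).card := by
          rw [← Finset.sum_union (Finset.disjoint_sdiff)]
          apply Finset.sum_le_sum_of_subset
          intro p hp
          rcases Finset.mem_union.mp hp with h | h
          · exact Finset.mem_union_left _ h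
          · by_cases h' : p ∈ famA
            · exact Finset.mem_union_left _ h'
            · exact Finset.mem_union_right _ (Finset.mem_sdiff.mpr ⟨h, h'⟩)
    _ ≤ _ := by
          apply Nat.add_le_add_left
          apply Finset.sum_le_sum_of_subset
          exact Finset.sdiff_subset
  have hAcard : famA.card ≤ tau S * (2 * Wc S + 1) := by
    rw [hfamA]
    calc ((((TS S).erase t) ×ˢ Finset.Icc (-Wz) Wz).image _).card
        ≤ (((TS S).erase t) ×ˢ Finset.Icc (-Wz) Wz).card := Finset.card_image_le
    _ = ((TS S).erase t).card * (Finset.Icc (-Wz) Wz).card := Finset.card_product _ _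
    _ ≤ tau S * (2 * Wc S + 1) := by
        apply Nat.mul_le_mul
        · calc ((TS S).erase t).card ≤ (TS S).card := Finset.card_erase_le
          _ = tau S := (Finset.length_toList _).symm
        · rw [Int.card_Icc]
          omega
  have hBcard : famB.card ≤ tau S * 4 := by
    rw [hfamB]
    calc ((Finset.range i).biUnion _).card ≤ ∑ j ∈ Finset.range i,
        (({0, tg S j, -t, tg S j - t} : Finset Z2).image (fun c => (c, j))).card :=
          Finset.card_biUnion_le
    _ ≤ ∑ j ∈ Finset.range i, 4 := by
        apply Finset.sum_le_sum
        intro j _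
        calc (({0, tg S j, -t, tg S j - t} : Finset Z2).image _).card
            ≤ ({0, tg S j, -t, tg S j - t} : Finset Z2).card := Finset.card_image_le
        _ ≤ 4 := by
            apply le_trans (Finset.card_insert_le _ _)
            apply Nat.succ_le_succ
            apply le_trans (Finset.card_insert_le _ _)
            apply Nat.succ_le_succ
            exact le_trans (Finset.card_insert_le _ _) (Nat.succ_le_succ
              (le_of_eq (Finset.card_singleton _)))
    _ ≤ tau S * 4 := by
        rw [Finset.sum_const, Finset.card_range, smul_eq_mul]
        omega
  have hsumA : ∑ p ∈ famA, (fam p).card ≤ famA.card * 9 := by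
    calc ∑ p ∈ famA, (fam p).card ≤ ∑ _p ∈ famA, 9 :=
      Finset.sum_le_sum (fun p hp => hsepA p (hA2 p hp))
    _ = famA.card * 9 := by rw [Finset.sum_const]; ring
  have hsumB : ∑ p ∈ famB, (fam p).card ≤ famB.card * (800 * (tau S + 1) * Wc S + 1) := by
    calc ∑ p ∈ famB, (fam p).card ≤ ∑ _p ∈ famB, (800 * (tau S + 1) * Wc S + 1) :=
      Finset.sum_le_sum (fun p hp => hsepB p (hB2 p hp))
    _ = famB.card * _ := by rw [Finset.sum_const]; ring
  -- final arithmetic contradiction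
  have hIcard' : I.card = 8 * Jc S + 1 := by
    have : (I.card : ℤ) = 8 * (Jc S : ℤ) + 1 := by rw [hIcard, hlen, hJz]
    exact_mod_cast this
  have hfinal : 8 * Jc S + 1 ≤ tau S * (2 * Wc S + 1) * 9
      + tau S * 4 * (800 * (tau S + 1) * Wc S + 1) := by
    calc 8 * Jc S + 1 = I.card := hIcard'.symm
    _ ≤ ∑ p ∈ famA ∪ famB, (fam p).card := hcount
    _ ≤ _ + _ := hsum
    _ ≤ famA.card * 9 + famB.card * (800 * (tau S + 1) * Wc S + 1) :=
        Nat.add_le_add hsumA hsumB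
    _ ≤ _ := Nat.add_le_add (Nat.mul_le_mul_right _ hAcard)
        (Nat.mul_le_mul_right _ hBcard)
  rw [Jc, Wc] at hfinal
  set n := tau S
  have hbig : n * (2 * (8 * n + 8) + 1) * 9 + n * 4 * (800 * (n + 1) * (8 * n + 8) + 1)
      < 8 * (100 * (n + 1) * (8 * n + 8) * (8 * n + 8 + 1)) + 1 := by
    nlinarith [Nat.zero_le n, sq_nonneg n]
  omega
/-! ### Edge classification and the coloring -/

lemma shift_cancel {t : Z2} {u v : Space 2} (h : shift t u = shift t v) : u = v := by
  have := congrArg (shift (-t)) h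
  rwa [shift_shift, shift_shift, neg_add_cancel, shift_zero, shift_zero] at this

lemma two_smul_ne_zero {t : Z2} (ht : t ≠ 0) : t + t ≠ 0 := by
  rw [ne_zero_iff_z2] at ht ⊢
  simp only [Pi.add_apply]
  omega

abbrev EdgeT := {p : FreePart 2 × FreePart 2 // (SchreierS S).Adj p.1 p.2}

lemma adj_exu (p : EdgeT S) : ∃! t, t ∈ TS S ∧
    (((p.1.2 : Space 2) = shift t (p.1.1 : Space 2)) ∨
     ((p.1.1 : Space 2) = shift t (p.1.2 : Space 2))) := by
  obtain ⟨⟨x, y⟩, hadj⟩ := p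
  rw [SchreierS, SimpleGraph.fromRel_adj] at hadj
  obtain ⟨hne, hrel⟩ := hadj
  dsimp only at hne hrel ⊢
  have hxy : (x : Space 2) ≠ (y : Space 2) := fun h => hne (Subtype.ext h)
  have hx : (x : Space 2) ∈ FreePart 2 := x.2
  have hy : (y : Space 2) ∈ FreePart 2 := y.2
  -- existence
  have hex : ∃ t, t ∈ TS S ∧
      (((y : Space 2)) = shift t (x : Space 2) ∨ ((x : Space 2)) = shift t (y : Space 2)) := by
    rcases hrel with ⟨g, hgS, hgx⟩ | ⟨g, hgS, hgy⟩
    · have hg0 : g ≠ 0 := by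
        rintro rfl
        rw [shift_zero] at hgx
        exact hxy hgx
      rcases exists_TS_of_S S hgS hg0 with h | h
      · exact ⟨g, h, Or.inl hgx.symm⟩
      · refine ⟨-g, h, Or.inr ?_⟩
        rw [← hgx, shift_shift, neg_add_cancel, shift_zero]
    · have hg0 : g ≠ 0 := by
        rintro rfl
        rw [shift_zero] at hgy
        exact hxy hgy.symm
      rcases exists_TS_of_S S hgS hg0 with h | h
      · exact ⟨g, h, Or.inr hgy.symm⟩
      · refine ⟨-g, h, Or.inl ?_⟩
        rw [← hgy, shift_shift, neg_add_cancel, shift_zero]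
  obtain ⟨t, ht, hprop⟩ := hex
  refine ⟨t, ⟨ht, hprop⟩, ?_⟩
  rintro t' ⟨ht', hprop'⟩
  -- uniqueness
  rcases hprop' with h1 | h1 <;> rcases hprop with h2 | h2
  · exact shift_inj_free hx (h1.symm.trans h2)
  · exfalso
    rw [h2, shift_shift] at h1
    have := shift_eq_self_free hy h1.symm
    have ht'' : t' = -t := by
      have : t' = -t + (t' + t) := by abel
      rw [this, ‹t' + t = 0›]
      simp
    rw [ht''] at ht'
    exact neg_not_mem_TS S ht ht'
  · exfalso
    rw [h2, shift_shift] at h1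
    have := shift_eq_self_free hx h1.symm
    have ht'' : t' = -t := by
      have : t' = -t + (t' + t) := by abel
      rw [this, ‹t' + t = 0›]
      simp
    rw [ht''] at ht'
    exact neg_not_mem_TS S ht ht'
  · exact shift_inj_free hy (h1.symm.trans h2)

noncomputable def tE (p : EdgeT S) : Z2 :=
  Finset.choose (fun t => ((p.1.2 : Space 2) = shift t (p.1.1 : Space 2)) ∨
    ((p.1.1 : Space 2) = shift t (p.1.2 : Space 2))) (TS S) (adj_exu S p)

lemma tE_mem (p : EdgeT S) : tE S p ∈ TS S :=
  Finset.choose_mem _ _ _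

lemma tE_prop (p : EdgeT S) :
    ((p.1.2 : Space 2) = shift (tE S p) (p.1.1 : Space 2)) ∨
    ((p.1.1 : Space 2) = shift (tE S p) (p.1.2 : Space 2)) :=
  Finset.choose_property (fun t => ((p.1.2 : Space 2) = shift t (p.1.1 : Space 2)) ∨
    ((p.1.1 : Space 2) = shift t (p.1.2 : Space 2))) (TS S) (adj_exu S p)

lemma tE_unique (p : EdgeT S) {t : Z2} (ht : t ∈ TS S)
    (h : ((p.1.2 : Space 2) = shift t (p.1.1 : Space 2)) ∨
     ((p.1.1 : Space 2) = shift t (p.1.2 : Space 2))) : t = tE S p := by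
  have h2 : tE S p ∈ TS S ∧
      (((p.1.2 : Space 2) = shift (tE S p) (p.1.1 : Space 2)) ∨
       ((p.1.1 : Space 2) = shift (tE S p) (p.1.2 : Space 2))) :=
    ⟨tE_mem S p, tE_prop S p⟩
  exact (adj_exu S p).unique ⟨ht, h⟩ h2

noncomputable def iE (p : EdgeT S) : ℕ := (tll S).idxOf (tE S p)

lemma iE_lt (p : EdgeT S) : iE S p < tau S :=
  List.idxOf_lt_length_iff.mpr (Finset.mem_toList.mpr (tE_mem S p))

lemma tg_iE (p : EdgeT S) : tg S (iE S p) = tE S p := by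
  rw [tg, List.getD_eq_getElem?_getD, List.getElem?_eq_getElem (iE_lt S p), Option.getD_some]
  exact List.getElem_idxOf _

noncomputable def zE (p : EdgeT S) : Space 2 :=
  if (p.1.2 : Space 2) = shift (tE S p) (p.1.1 : Space 2) then (p.1.1 : Space 2)
  else (p.1.2 : Space 2)

lemma zE_free (p : EdgeT S) : zE S p ∈ FreePart 2 := by
  rw [zE]
  split
  · exact p.1.1.2
  · exact p.1.2.2

/-- either way, `{zE, shift t zE}` is the edge -/
lemma zE_spec (p : EdgeT S) :
    (zE S p = (p.1.1 : Space 2) ∧ shift (tE S p) (zE S p) = (p.1.2 : Space 2)) ∨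
    (zE S p = (p.1.2 : Space 2) ∧ shift (tE S p) (zE S p) = (p.1.1 : Space 2)) := by
  rw [zE]
  split
  · exact Or.inl ⟨rfl, (by assumption : _ = shift _ _).symm⟩
  · rcases tE_prop S p with h | h
    · exact absurd h (by assumption)
    · exact Or.inr ⟨rfl, h.symm⟩

lemma dE_exists (p : EdgeT S) :
    ∃ j : ℕ, shift (((j : ℤ) + 1) • (tE S p)) (zE S p) ∈ Bf S (iE S p) := by
  obtain ⟨k, hk1, hkB⟩ := tail_hit S (iE_lt S p) (zE_free S p) 1
  refine ⟨(k - 1).toNat, ?_⟩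
  have : ((k - 1).toNat : ℤ) + 1 = k := by omega
  rw [this, tg_iE] at *
  exact hkB

noncomputable def dE (p : EdgeT S) : ℕ := Nat.find (dE_exists S p)

noncomputable def colN (p : EdgeT S) : ℕ :=
  if dE S p = 0 then 0
  else if Even (dE S p) then 2 * iE S p + 1 else 2 * iE S p + 2

lemma colN_lt (p : EdgeT S) : colN S p < 2 * S.card + 1 := by
  have h1 : iE S p < tau S := iE_lt S p
  have h2 : tau S ≤ S.card := tau_le_card S
  rw [colN]
  split
  · omega
  · split <;> omega
/-! ### Properness -/

lemma Jc_pos : 0 < Jc S := by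
  have := Wc_pos S
  have h1 : 0 < 100 * (tau S + 1) := by omega
  unfold Jc
  positivity

lemma sep_one {i : ℕ} (hi : i < tau S) {u : Space 2} (h1 : u ∈ Bf S i)
    (h2 : shift ((1:ℤ) • tg S i) u ∈ Bf S i) : False := by
  refine BB_sep S (t := tg S i) (Z := zacc S i) (ht' := ?_) (k := 1) ?_ ?_ h1 h2
  · exact tg_mem S hi
  · norm_num
  · rw [bnd, if_pos rfl]
    simpa using Nat.one_le_iff_ne_zero.mpr (Nat.pos_iff_ne_zero.mp (Jc_pos S))

lemma find_succ {t : Z2} {i : ℕ} {u : Space 2}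
    (h1 : ∃ j : ℕ, shift (((j : ℤ) + 1) • t) u ∈ Bf S i)
    (h2 : ∃ j : ℕ, shift (((j : ℤ) + 1) • t) (shift ((1:ℤ) • t) u) ∈ Bf S i)
    (hu : shift ((1:ℤ) • t) u ∉ Bf S i) :
    Nat.find h1 = Nat.find h2 + 1 := by
  rw [Nat.find_eq_iff]
  constructor
  · have hspec := Nat.find_spec h2
    rw [shift_smul_shift] at hspec
    have he : ((Nat.find h2 : ℤ) + 1) + 1 = ((Nat.find h2 + 1 : ℕ) : ℤ) + 1 := by push_cast; ring
    rwa [he] at hspec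
  · intro j hj
    match j with
    | 0 =>
      intro hc
      apply hu
      have he : (((0:ℕ) : ℤ) + 1) = (1:ℤ) := by norm_num
      rwa [he] at hc
    | j+1 =>
      intro hc
      have hmin := Nat.find_min h2 (m := j) (by omega)
      apply hmin
      rw [shift_smul_shift]
      have he : ((j:ℤ) + 1) + 1 = ((j+1 : ℕ) : ℤ) + 1 := by push_cast; ring
      rwa [← he] at hc

/-- both endpoints of a defect edge lie in the zone of its direction -/
lemma vertex_zone (p : EdgeT S) (hd : dE S p = 0) :
    (p.1.1 : Space 2) ∈ zoneOf (Bf S (iE S p)) (tg S (iE S p)) ∧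
    (p.1.2 : Space 2) ∈ zoneOf (Bf S (iE S p)) (tg S (iE S p)) := by
  have hspec := Nat.find_spec (dE_exists S p)
  rw [show Nat.find (dE_exists S p) = dE S p from rfl, hd] at hspec
  have h1 : shift ((1:ℤ) • tE S p) (zE S p) ∈ Bf S (iE S p) := by
    have he : (((0:ℕ):ℤ) + 1) = (1:ℤ) := by norm_num
    rwa [he] at hspec
  rw [one_smul] at h1
  have hzz : zE S p ∈ zoneOf (Bf S (iE S p)) (tg S (iE S p)) := by
    right
    show shift (tg S (iE S p)) (zE S p) ∈ Bf S (iE S p)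
    rwa [tg_iE]
  have hsz : shift (tE S p) (zE S p) ∈ zoneOf (Bf S (iE S p)) (tg S (iE S p)) :=
    Or.inl h1
  rcases zE_spec S p with ⟨ha, hb⟩ | ⟨ha, hb⟩
  · rw [← ha, ← hb]
    exact ⟨hzz, hsz⟩
  · rw [← ha, ← hb]
    exact ⟨hsz, hzz⟩

lemma colN_zero_iff (p : EdgeT S) : colN S p = 0 ↔ dE S p = 0 := by
  rw [colN]
  split
  · simp_all
  · split <;> omega

lemma iE_inj {p q : EdgeT S} (h : iE S p = iE S q) : tE S p = tE S q := by
  have h1 := tg_iE S p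
  have h2 := tg_iE S q
  rw [← h1, ← h2, h]

/-! ### Symmetry of the coloring -/

lemma colN_symm (p q : EdgeT S) (h1 : p.1.1 = q.1.2) (h2 : p.1.2 = q.1.1) :
    colN S p = colN S q := by
  set t := tE S p with ht_def
  have ht : t ∈ TS S := tE_mem S p
  have htq : t = tE S q := by
    apply tE_unique
    · exact ht
    · rcases tE_prop S p with h | h
      · right
        rw [← h1, ← h2]
        exact h
      · left
        rw [← h1, ← h2]
        exact h
  have hiq : iE S q = iE S p := by
    rw [iE, iE, ← htq]
  have hzq : zE S q = zE S p := by
    by_cases hA : (p.1.2 : Space 2) = shift t (p.1.1 : Space 2)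
    · have hB : ¬ ((q.1.2 : Space 2) = shift (tE S q) (q.1.1 : Space 2)) := by
        rw [← htq, ← h1, ← h2]
        intro hB
        rw [hA, shift_shift] at hB
        have h0 : t + t = 0 := shift_eq_self_free p.1.1.2 hB.symm
        exact two_smul_ne_zero (TS_ne_zero S ht) h0
      rw [zE, if_neg hB, zE, if_pos (by rw [← ht_def] at *; exact hA), ← h1]
    · have hA' : (p.1.1 : Space 2) = shift t (p.1.2 : Space 2) :=
        (tE_prop S p).resolve_left hA
      have hB : (q.1.2 : Space 2) = shift (tE S q) (q.1.1 : Space 2) := by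
        rw [← htq, ← h1, ← h2]
        exact hA'
      rw [zE, if_pos hB, zE, if_neg (by rw [← ht_def] at *; exact hA), ← h2]
  have hd : dE S q = dE S p := by
    rw [dE, Nat.find_eq_iff]
    constructor
    · have hspec := Nat.find_spec (dE_exists S p)
      rw [← htq, hzq, hiq]
      exact hspec
    · intro j hj
      have hmin := Nat.find_min (dE_exists S p) (m := j) hj
      rw [← htq, hzq, hiq]
      exact hmin
  rw [colN, colN, hd, hiq]

/-! ### Properness at a shared vertex -/

lemma colN_proper (p q : EdgeT S) (h1 : p.1.2 = q.1.1) (h2 : p.1.1 ≠ q.1.2) :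
    colN S p ≠ colN S q := by
  intro heq
  by_cases hti : iE S p = iE S q
  · -- same direction: consecutive edges on a line
    have htpq : tE S p = tE S q := iE_inj S hti
    set t := tE S p with ht_def
    set i := iE S p with hi_def
    have hilt : i < tau S := iE_lt S p
    have htg : tg S i = t := tg_iE S p
    by_cases hA : (p.1.2 : Space 2) = shift t (p.1.1 : Space 2)
    · by_cases hB : (q.1.2 : Space 2) = shift (tE S q) (q.1.1 : Space 2)
      · -- x --t--> y --t--> w  : consecutive
        have hzp : zE S p = (p.1.1 : Space 2) := by rw [zE, if_pos hA]
        have hzq : zE S q = (q.1.1 : Space 2) := by rw [zE, if_pos hB]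
        have hyz : zE S q = shift ((1:ℤ) • t) (zE S p) := by
          rw [hzq, hzp, one_smul, ← hA, h1]
        by_cases hyB : shift ((1:ℤ) • t) (zE S p) ∈ Bf S i
        · -- p is a defect edge, q is not
          have hdp : dE S p = 0 := by
            rw [dE, Nat.find_eq_iff]
            refine ⟨?_, by omega⟩
            have he : (((0:ℕ):ℤ) + 1) = (1:ℤ) := by norm_num
            rw [he]
            exact hyB
          have hdq : dE S q ≠ 0 := by
            intro hdq
            have hspec := Nat.find_spec (dE_exists S q)
            rw [show Nat.find (dE_exists S q) = dE S q from rfl, hdq] at hspec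
            have he : (((0:ℕ):ℤ) + 1) = (1:ℤ) := by norm_num
            rw [he, ← htpq, ← hti] at hspec
            rw [hyz] at hspec
            rw [shift_smul_shift] at hspec
            -- hspec : shift ((1+1) • t) (zE S p) ∈ Bf S i
            refine sep_one S hilt (u := shift ((1:ℤ) • t) (zE S p)) hyB ?_
            rw [htg, shift_smul_shift]
            exact hspec
          rw [(colN_zero_iff S p).mpr hdp] at heq
          have := (colN_zero_iff S q).mp heq.symm
          exact hdq this
        · -- d p = d q + 1
          have hq2 : ∃ j : ℕ, shift (((j : ℤ) + 1) • t) (shift ((1:ℤ) • t) (zE S p))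
              ∈ Bf S i := by
            have := dE_exists S q
            rw [← htpq, ← hti, hyz] at this
            exact this
          have hdq_eq : dE S q = Nat.find hq2 := by
            rw [dE, Nat.find_eq_iff]
            constructor
            · have hspec := Nat.find_spec hq2
              rw [← htpq, ← hti, hyz]
              exact hspec
            · intro j hj
              have hmin := Nat.find_min hq2 (m := j) hj
              rw [← htpq, ← hti, hyz]
              exact hmin
          have hdp_eq : dE S p = Nat.find hq2 + 1 := find_succ S (dE_exists S p) hq2 hyB
          have hdp0 : dE S p ≠ 0 := by omega
          rw [colN, colN, if_neg hdp0] at heq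
          by_cases hdq0 : dE S q = 0
          · rw [if_pos hdq0] at heq
            split at heq <;> omega
          · rw [if_neg hdq0] at heq
            have hpar : Even (dE S p) ↔ ¬ Even (dE S q) := by
              rw [hdp_eq, ← hdq_eq]
              exact Nat.even_add_one
            rw [← hti] at heq
            by_cases he1 : Even (dE S p) <;> by_cases he2 : Even (dE S q)
            · exact (hpar.mp he1) he2
            · rw [if_pos he1, if_neg he2] at heq
              omega
            · rw [if_neg he1, if_pos he2] at heq
              omega
            · exact he1 (hpar.mpr he2)
      · -- q reversed: w <--t-- y ,  but then w = x
        exfalso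
        have hB' : (q.1.1 : Space 2) = shift (tE S q) (q.1.2 : Space 2) :=
          (tE_prop S q).resolve_left hB
        rw [← htpq, ← h1] at hB'
        rw [hA] at hB'
        have := shift_cancel hB'
        exact h2 (Subtype.ext this)
    · have hA' : (p.1.1 : Space 2) = shift t (p.1.2 : Space 2) :=
        (tE_prop S p).resolve_left hA
      by_cases hB : (q.1.2 : Space 2) = shift (tE S q) (q.1.1 : Space 2)
      · -- x <--t-- y  and  w = shift t y : x = w
        exfalso
        rw [← htpq, ← h1] at hB
        exact h2 (Subtype.ext (hA'.trans hB.symm))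
      · -- w --t--> y --t--> x : consecutive, roles swapped
        have hB' : (q.1.1 : Space 2) = shift (tE S q) (q.1.2 : Space 2) :=
          (tE_prop S q).resolve_left hB
        have hzp : zE S p = (p.1.2 : Space 2) := by rw [zE, if_neg hA]
        have hzq : zE S q = (q.1.2 : Space 2) := by rw [zE, if_neg hB]
        have hyz : zE S p = shift ((1:ℤ) • t) (zE S q) := by
          rw [hzq, hzp, one_smul, h1, hB', htpq]
        by_cases hyB : shift ((1:ℤ) • t) (zE S q) ∈ Bf S i
        · have hdq : dE S q = 0 := by
            rw [dE, Nat.find_eq_iff]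
            refine ⟨?_, by omega⟩
            have he : (((0:ℕ):ℤ) + 1) = (1:ℤ) := by norm_num
            rw [he, ← htpq, ← hti]
            exact hyB
          have hdp : dE S p ≠ 0 := by
            intro hdp
            have hspec := Nat.find_spec (dE_exists S p)
            rw [show Nat.find (dE_exists S p) = dE S p from rfl, hdp] at hspec
            have he : (((0:ℕ):ℤ) + 1) = (1:ℤ) := by norm_num
            rw [he, ← ht_def, ← hi_def, hyz, shift_smul_shift] at hspec
            refine sep_one S hilt (u := shift ((1:ℤ) • t) (zE S q)) hyB ?_
            rw [htg, shift_smul_shift]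
            exact hspec
          rw [(colN_zero_iff S q).mpr hdq] at heq
          exact hdp ((colN_zero_iff S p).mp heq)
        · have hq2 : ∃ j : ℕ, shift (((j : ℤ) + 1) • t) (shift ((1:ℤ) • t) (zE S q))
              ∈ Bf S i := by
            have := dE_exists S p
            rw [← ht_def, ← hi_def, hyz] at this
            exact this
          have hdp_eq : dE S p = Nat.find hq2 := by
            rw [dE, Nat.find_eq_iff]
            constructor
            · have hspec := Nat.find_spec hq2
              rw [← ht_def, ← hi_def, hyz]
              exact hspec
            · intro j hj
              have hmin := Nat.find_min hq2 (m := j) hj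
              rw [← ht_def, ← hi_def, hyz]
              exact hmin
          have hq2' : ∃ j : ℕ, shift (((j : ℤ) + 1) • tE S q) (zE S q)
              ∈ Bf S (iE S q) := dE_exists S q
          have hdq_eq : dE S q = Nat.find hq2 + 1 := by
            have hq0 : ∃ j : ℕ, shift (((j : ℤ) + 1) • t) (zE S q) ∈ Bf S i := by
              have := dE_exists S q
              rwa [← htpq, ← hti] at this
            have hfs := find_succ S (t := t) (i := i) (u := zE S q) hq0 hq2 hyB
            have hdq_find : dE S q = Nat.find hq0 := by
              rw [dE, Nat.find_eq_iff]
              constructor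
              · have hspec := Nat.find_spec hq0
                rw [← htpq, ← hti]
                exact hspec
              · intro j hj
                have hmin := Nat.find_min hq0 (m := j) hj
                rw [← htpq, ← hti]
                exact hmin
            rw [hdq_find, hfs]
          have hdq0 : dE S q ≠ 0 := by omega
          rw [colN, colN, if_neg hdq0] at heq
          by_cases hdp0 : dE S p = 0
          · rw [if_pos hdp0] at heq
            split at heq <;> omega
          · rw [if_neg hdp0] at heq
            have hpar : Even (dE S q) ↔ ¬ Even (dE S p) := by
              rw [hdq_eq, ← hdp_eq]
              exact Nat.even_add_one
            rw [← hti] at heq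
            by_cases he1 : Even (dE S p) <;> by_cases he2 : Even (dE S q)
            · exact (hpar.mp he2) he1
            · rw [if_pos he1, if_neg he2] at heq
              omega
            · rw [if_neg he1, if_pos he2] at heq
              omega
            · exact he2 (hpar.mpr he1)
  · -- different directions
    have htne : tE S p ≠ tE S q := fun h => hti (by rw [iE, iE, h])
    by_cases hdp : dE S p = 0
    · have hcp : colN S p = 0 := (colN_zero_iff S p).mpr hdp
      have hdq : dE S q = 0 := (colN_zero_iff S q).mp (by omega)
      have hv1 := (vertex_zone S p hdp).2
      have hv2 := (vertex_zone S q hdq).1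
      rw [h1] at hv1
      rcases Nat.lt_or_ge (iE S p) (iE S q) with h | h
      · exact zone_disj S h hv2 hv1
      · have : iE S q < iE S p := by omega
        exact zone_disj S this hv1 hv2
    · have hdq : dE S q ≠ 0 := by
        intro hdq0
        have : colN S q = 0 := (colN_zero_iff S q).mpr hdq0
        rw [this] at heq
        exact hdp ((colN_zero_iff S p).mp heq)
      rw [colN, colN, if_neg hdp, if_neg hdq] at heq
      have : iE S p ≠ iE S q := hti
      split at heq <;> split at heq <;> omega
/-! ### Local determination of the coloring, continuity, and the main theorem -/

lemma colN_local (p : EdgeT S) : ∃ Lx Ly : List Z2,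
    ∀ q : EdgeT S, (∀ v ∈ Lx, ((q.1.1 : Space 2)) v = ((p.1.1 : Space 2)) v) →
      (∀ v ∈ Ly, ((q.1.2 : Space 2)) v = ((p.1.2 : Space 2)) v) →
      colN S q = colN S p := by
  classical
  set x : Space 2 := (p.1.1 : Space 2) with hx_def
  set y : Space 2 := (p.1.2 : Space 2) with hy_def
  have hxf : x ∈ FreePart 2 := p.1.1.2
  have hyf : y ∈ FreePart 2 := p.1.2.2
  have hne_xy : x ≠ y := fun h => (p.2.ne) (Subtype.ext h)
  set t : Z2 := tE S p with ht_def
  have ht : t ∈ TS S := tE_mem S p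
  set i : ℕ := iE S p with hi_def
  set d : ℕ := dE S p with hd_def
  set z : Space 2 := zE S p with hz_def
  have hzf : z ∈ FreePart 2 := zE_free S p
  set g₀ : Z2 := if y = shift t x then t else -t with hg0_def
  have hyg : y = shift g₀ x := by
    rw [hg0_def]
    split
    · assumption
    · have hA' : x = shift t y := (tE_prop S p).resolve_left (by assumption)
      rw [hA', shift_shift, neg_add_cancel, shift_zero]
  set P : List Z2 := (tll S).flatMap (fun t' => [t', -t']) with hP_def
  set F1 : Z2 → List Z2 := fun g =>
    if hg : shift g x = y then [] else [g + Classical.choose (Function.ne_iff.mp hg)]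
    with hF1_def
  set F2 : Z2 → List Z2 := fun g =>
    if hg : shift g x = y then [] else [Classical.choose (Function.ne_iff.mp hg)]
    with hF2_def
  have hLoc := Loc_Bf S i
  set lj : ℕ → List Z2 := fun j =>
    Classical.choose (hLoc (shift (((j:ℤ)+1) • t) z) (free_shift hzf)) with hlj_def
  have hlj : ∀ j : ℕ, ∀ w ∈ FreePart 2,
      (∀ v ∈ lj j, w v = shift (((j:ℤ)+1) • t) z v) →
      (w ∈ Bf S i ↔ shift (((j:ℤ)+1) • t) z ∈ Bf S i) := fun j =>
    Classical.choose_spec (hLoc (shift (((j:ℤ)+1) • t) z) (free_shift hzf))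
  set Lz : List Z2 := (List.range (d+1)).flatMap
    (fun j => (lj j).map (fun v => ((j:ℤ)+1) • t + v)) with hLz_def
  refine ⟨P.flatMap F1 ++ (if y = shift t x then Lz else []),
          P.flatMap F2 ++ (if y = shift t x then [] else Lz), ?_⟩
  intro q hqx hqy
  have hx'f : (q.1.1 : Space 2) ∈ FreePart 2 := q.1.1.2
  have hy'f : (q.1.2 : Space 2) ∈ FreePart 2 := q.1.2.2
  have hqx1 : ∀ v ∈ P.flatMap F1, (q.1.1 : Space 2) v = x v :=
    fun v hv => hqx v (by simp [hv])
  have hqy1 : ∀ v ∈ P.flatMap F2, (q.1.2 : Space 2) v = y v :=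
    fun v hv => hqy v (by simp [hv])
  -- step 1 : q has the same direction and orientation
  have hstep1 : (q.1.2 : Space 2) = shift g₀ (q.1.1 : Space 2) := by
    have htq := tE_mem S q
    have hpropq := tE_prop S q
    have hex : ∃ g', (g' ∈ P) ∧ (q.1.2 : Space 2) = shift g' (q.1.1 : Space 2) := by
      rcases hpropq with h | h
      · refine ⟨tE S q, ?_, h⟩
        rw [hP_def]
        refine List.mem_flatMap.mpr ⟨tE S q, Finset.mem_toList.mpr htq, by simp⟩
      · refine ⟨-(tE S q), ?_, ?_⟩
        · rw [hP_def]
          refine List.mem_flatMap.mpr ⟨tE S q, Finset.mem_toList.mpr htq, by simp⟩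
        · rw [h, shift_shift, neg_add_cancel, shift_zero]
    obtain ⟨g', hg'P, hg'⟩ := hex
    have hgg : shift g' x = y := by
      by_contra hne
      have hv := Classical.choose_spec (Function.ne_iff.mp hne)
      set v := Classical.choose (Function.ne_iff.mp hne) with hv_def
      have h1 : (q.1.1 : Space 2) (g' + v) = x (g' + v) := by
        apply hqx1
        refine List.mem_flatMap.mpr ⟨g', hg'P, ?_⟩
        rw [hF1_def]
        simp only
        rw [dif_neg hne]
        simp
        exact hv_def
      have h2 : (q.1.2 : Space 2) v = y v := by
        apply hqy1
        refine List.mem_flatMap.mpr ⟨g', hg'P, ?_⟩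
        rw [hF2_def]
        simp only
        rw [dif_neg hne]
        simp
        exact hv_def
      apply hv
      calc shift g' x v = x (g' + v) := rfl
      _ = (q.1.1 : Space 2) (g' + v) := h1.symm
      _ = shift g' (q.1.1 : Space 2) v := rfl
      _ = (q.1.2 : Space 2) v := by rw [← hg']
      _ = y v := h2
    have : g' = g₀ := shift_inj_free hxf (by rw [hgg, hyg])
    rwa [this] at hg'
  have htEq : tE S q = t := by
    symm
    apply tE_unique S q ht
    by_cases hA : y = shift t x
    · left
      have hg : g₀ = t := by rw [hg0_def, if_pos hA]
      rw [← hg]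
      exact hstep1
    · right
      have hg : g₀ = -t := by rw [hg0_def, if_neg hA]
      rw [hg] at hstep1
      rw [hstep1, shift_shift]
      have he : t + -t = 0 := by abel
      rw [he, shift_zero]
  have hiEq : iE S q = i := by rw [iE, htEq, hi_def, iE, ← ht_def]
  have hzEq : (zE S q = (q.1.1 : Space 2) ∧ z = x) ∨
      (zE S q = (q.1.2 : Space 2) ∧ z = y) := by
    by_cases hA : y = shift t x
    · left
      have hg : g₀ = t := by rw [hg0_def, if_pos hA]
      rw [hg] at hstep1
      constructor
      · rw [zE, htEq, if_pos hstep1]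
      · rw [hz_def, zE, ← ht_def, if_pos hA]
    · right
      have hg : g₀ = -t := by rw [hg0_def, if_neg hA]
      rw [hg] at hstep1
      constructor
      · have hcn : ¬ ((q.1.2 : Space 2) = shift (tE S q) (q.1.1 : Space 2)) := by
          rw [htEq]
          intro hcc
          have h0 : t = -t := shift_inj_free hx'f (by rw [← hcc, ← hstep1])
          have h00 : t + t = 0 := by
            rw [eq_neg_iff_add_eq_zero] at h0
            exact h0
          exact two_smul_ne_zero (TS_ne_zero S ht) h00
        rw [zE, if_neg hcn]
      · rw [hz_def, zE, ← ht_def, if_neg hA]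
  -- agreement of the distinguished endpoint with z
  have hagz : ∀ v ∈ Lz, zE S q v = z v := by
    rcases hzEq with ⟨hq', hp'⟩ | ⟨hq', hp'⟩
    · have hA : y = shift t x := by
        by_contra hA
        rw [hz_def, zE, ← ht_def, if_neg hA] at hp'
        exact hne_xy hp'.symm
      intro v hv
      have h1 : (q.1.1 : Space 2) v = x v := by
        apply hqx v
        rw [List.mem_append]
        right
        rw [if_pos hA]
        exact hv
      rw [hq', hp']
      exact h1
    · have hA : ¬ (y = shift t x) := by
        intro hA
        rw [hz_def, zE, ← ht_def, if_pos hA] at hp'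
        exact hne_xy hp'
      intro v hv
      have h1 : (q.1.2 : Space 2) v = y v := by
        apply hqy v
        rw [List.mem_append]
        right
        rw [if_neg hA]
        exact hv
      rw [hq', hp']
      exact h1
  -- step 2 : same distance
  have hdEq : dE S q = d := by
    have hPiff : ∀ j : ℕ, j ≤ d →
        ((shift (((j:ℤ)+1) • t) (zE S q) ∈ Bf S i) ↔
         (shift (((j:ℤ)+1) • t) z ∈ Bf S i)) := by
      intro j hj
      apply hlj j _ (free_shift (zE_free S q))
      intro v hv
      calc shift (((j:ℤ)+1) • t) (zE S q) v = zE S q (((j:ℤ)+1) • t + v) := rfl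
      _ = z (((j:ℤ)+1) • t + v) := by
          apply hagz
          rw [hLz_def]
          exact List.mem_flatMap.mpr ⟨j, List.mem_range.mpr (by omega),
            List.mem_map.mpr ⟨v, hv, rfl⟩⟩
      _ = shift (((j:ℤ)+1) • t) z v := rfl
    rw [dE, Nat.find_eq_iff]
    constructor
    · rw [htEq, hiEq]
      exact (hPiff d le_rfl).mpr (Nat.find_spec (dE_exists S p))
    · intro j hj
      rw [htEq, hiEq]
      intro hc
      exact Nat.find_min (dE_exists S p) (m := j) hj ((hPiff j (by omega)).mp hc)
  rw [colN, colN, hdEq, hiEq]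
/-! ### Openness of cylinder conditions on edges -/

lemma isOpen_cyl_fst (v : Z2) (b : Bool) :
    IsOpen {q : EdgeT S | ((q.1.1 : Space 2)) v = b} := by
  have hc : Continuous (fun q : EdgeT S => ((q.1.1 : Space 2)) v) :=
    (continuous_apply v).comp
      (continuous_subtype_val.comp (continuous_fst.comp continuous_subtype_val))
  exact IsOpen.preimage hc (isOpen_discrete {b})

lemma isOpen_cyl_snd (v : Z2) (b : Bool) :
    IsOpen {q : EdgeT S | ((q.1.2 : Space 2)) v = b} := by
  have hc : Continuous (fun q : EdgeT S => ((q.1.2 : Space 2)) v) :=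
    (continuous_apply v).comp
      (continuous_subtype_val.comp (continuous_snd.comp continuous_subtype_val))
  exact IsOpen.preimage hc (isOpen_discrete {b})

lemma isOpen_agree (p : EdgeT S) (Lx Ly : List Z2) :
    IsOpen {q : EdgeT S |
      (∀ v ∈ Lx, ((q.1.1 : Space 2)) v = ((p.1.1 : Space 2)) v) ∧
      (∀ v ∈ Ly, ((q.1.2 : Space 2)) v = ((p.1.2 : Space 2)) v)} := by
  classical
  have he : {q : EdgeT S |
      (∀ v ∈ Lx, ((q.1.1 : Space 2)) v = ((p.1.1 : Space 2)) v) ∧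
      (∀ v ∈ Ly, ((q.1.2 : Space 2)) v = ((p.1.2 : Space 2)) v)} =
      (⋂ v ∈ Lx.toFinset, {q : EdgeT S | ((q.1.1 : Space 2)) v = ((p.1.1 : Space 2)) v}) ∩
      (⋂ v ∈ Ly.toFinset, {q : EdgeT S | ((q.1.2 : Space 2)) v = ((p.1.2 : Space 2)) v}) := by
    ext q
    simp only [Set.mem_setOf_eq, Set.mem_inter_iff, Set.mem_iInter, List.mem_toFinset]
  rw [he]
  exact IsOpen.inter
    (isOpen_biInter_finset (fun v _ => isOpen_cyl_fst S v _))
    (isOpen_biInter_finset (fun v _ => isOpen_cyl_snd S v _))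

end

theorem stmt14 (S : Finset (Fin 2 → ℤ))
    (hgen : AddSubgroup.closure (S : Set (Fin 2 → ℤ)) = ⊤) :
    ∃ c : {p : FreePart 2 × FreePart 2 // (SchreierS S).Adj p.1 p.2} → Fin (2 * S.card + 1),
      Continuous c ∧
      (∀ p q, p.val.1 = q.val.2 → p.val.2 = q.val.1 → c p = c q) ∧
      (∀ p q, p.val.2 = q.val.1 → p.val.1 ≠ q.val.2 → c p ≠ c q) := by
  refine ⟨fun p => ⟨colN S p, colN_lt S p⟩, ?_, ?_, ?_⟩
  · apply IsLocallyConstant.continuous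
    rw [IsLocallyConstant.iff_exists_open]
    intro p
    obtain ⟨Lx, Ly, hL⟩ := colN_local S p
    refine ⟨_, isOpen_agree S p Lx Ly, ⟨fun v _ => rfl, fun v _ => rfl⟩, ?_⟩
    intro q hq
    exact Fin.ext (hL q hq.1 hq.2)
  · intro p q h1 h2
    exact Fin.ext (colN_symm S p q h1 h2)
  · intro p q h1 h2 hc
    exact colN_proper S p q h1 h2 (by injection hc)
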